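/- (Perfect distinguishability at the exceptional point.) Let ρ = |ψ⁺⟩⟨ψ⁺| be the maximally entangled two-qubit state (the Werner state ρ_W(1)) and take α = π/2. Then Bob's normalized reduced states corresponding to Alice's two operations are (Tr_A ρ₊)/Re(trace ρ₊) = (1/2)•!![1, Complex.I; −Complex.I, 1] (the projector onto |−_y⟩ = (|0⟩ − i|1⟩)/√2) and (Tr_A ρ₋)/Re(trace ρ₋) = (1/2)•!![1, −Complex.I; Complex.I, 1] (the projector onto |+_y⟩ = (|0⟩ + i|1⟩)/√2); these are orthogonal rank-one projections and their trace distance T equals 1, so Bob can distinguish Alice's operations perfectly. -/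

import Mathlib

open Matrix Kronecker Complex
open scoped ComplexOrder

noncomputable section

/-- Pauli matrix `σx`. -/
def σx : Matrix (Fin 2) (Fin 2) ℂ := !![0, 1; 1, 0]

/-- Pauli matrix `σy`. -/
def σy : Matrix (Fin 2) (Fin 2) ℂ := !![0, -Complex.I; Complex.I, 0]

/-- Pauli matrix `σz`. -/
def σz : Matrix (Fin 2) (Fin 2) ℂ := !![1, 0; 0, -1]

/-- The simulated PT-symmetric evolution operator at the chosen time. -/
def Upt (α : ℝ) : Matrix (Fin 2) (Fin 2) ℂ :=
  !![(Real.sin α : ℂ), -Complex.I; -Complex.I, -(Real.sin α : ℂ)]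

/-- Alice's operation `A₊` (do nothing). -/
def Apos : Matrix (Fin 2) (Fin 2) ℂ := 1

/-- Alice's operation `A₋` (bit flip `σx`). -/
def Aneg : Matrix (Fin 2) (Fin 2) ℂ := σx

/-- Unnormalized post-selected state after Alice applies `A₊` followed by the
simulated PT evolution. -/
def postPlus (α : ℝ) (ρ : Matrix (Fin 2 × Fin 2) (Fin 2 × Fin 2) ℂ) :
    Matrix (Fin 2 × Fin 2) (Fin 2 × Fin 2) ℂ :=
  ((Upt α * Apos) ⊗ₖ (1 : Matrix (Fin 2) (Fin 2) ℂ)) * ρ *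
    ((Upt α * Apos) ⊗ₖ (1 : Matrix (Fin 2) (Fin 2) ℂ))ᴴ

/-- Unnormalized post-selected state after Alice applies `A₋` followed by the
simulated PT evolution. -/
def postMinus (α : ℝ) (ρ : Matrix (Fin 2 × Fin 2) (Fin 2 × Fin 2) ℂ) :
    Matrix (Fin 2 × Fin 2) (Fin 2 × Fin 2) ℂ :=
  ((Upt α * Aneg) ⊗ₖ (1 : Matrix (Fin 2) (Fin 2) ℂ)) * ρ *
    ((Upt α * Aneg) ⊗ₖ (1 : Matrix (Fin 2) (Fin 2) ℂ))ᴴ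

/-- Probability that Bob obtains outcome `Π` given Alice applied `A₊`. -/
def Pplus (α : ℝ) (ρ : Matrix (Fin 2 × Fin 2) (Fin 2 × Fin 2) ℂ)
    (Pi : Matrix (Fin 2) (Fin 2) ℂ) : ℝ :=
  ((((1 : Matrix (Fin 2) (Fin 2) ℂ) ⊗ₖ Pi) * postPlus α ρ).trace).re /
    ((postPlus α ρ).trace).re

/-- Probability that Bob obtains outcome `Π` given Alice applied `A₋`. -/
def Pminus (α : ℝ) (ρ : Matrix (Fin 2 × Fin 2) (Fin 2 × Fin 2) ℂ)
    (Pi : Matrix (Fin 2) (Fin 2) ℂ) : ℝ :=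
  ((((1 : Matrix (Fin 2) (Fin 2) ℂ) ⊗ₖ Pi) * postMinus α ρ).trace).re /
    ((postMinus α ρ).trace).re

/-- Bob's `σy`-measurement projector onto `|+_y⟩ = (|0⟩ + i|1⟩)/√2`. -/
def Piy : Matrix (Fin 2) (Fin 2) ℂ :=
  (1/2 : ℂ) • !![1, -Complex.I; Complex.I, 1]

/-- Bob's rank-one projector `Π(z,u)` for an arbitrary projective measurement. -/
def Pizu (z u : ℝ) : Matrix (Fin 2) (Fin 2) ℂ :=
  !![((Real.cos (z/2))^2 : ℂ),
     (Real.cos (z/2) : ℂ) * (Real.sin (z/2) : ℂ) * Complex.exp (-(Complex.I * u));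
     (Real.cos (z/2) : ℂ) * (Real.sin (z/2) : ℂ) * Complex.exp (Complex.I * u),
     ((Real.sin (z/2))^2 : ℂ)]

/-- The single-qubit state `|+⟩ = (|0⟩ + |1⟩)/√2`. -/
def ketPlus : Fin 2 → ℂ := ![((1 / Real.sqrt 2 : ℝ) : ℂ), ((1 / Real.sqrt 2 : ℝ) : ℂ)]

/-- The single-qubit state `|−⟩ = (|0⟩ − |1⟩)/√2`. -/
def ketMinus : Fin 2 → ℂ := ![((1 / Real.sqrt 2 : ℝ) : ℂ), ((-(1 / Real.sqrt 2) : ℝ) : ℂ)]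

/-- The (normalized) pure state `|ψ_{β,γ}⟩ = (β|++⟩ + γ|−−⟩)/√(β²+γ²)`. -/
def ψpure (β γ : ℝ) : Fin 2 × Fin 2 → ℂ := fun q =>
  ((β : ℂ) * (ketPlus q.1 * ketPlus q.2) + (γ : ℂ) * (ketMinus q.1 * ketMinus q.2)) /
    ((Real.sqrt (β^2 + γ^2) : ℝ) : ℂ)

/-- The pure two-qubit density matrix `ρ_{β,γ} = |ψ_{β,γ}⟩⟨ψ_{β,γ}|`. -/
def ρpure (β γ : ℝ) : Matrix (Fin 2 × Fin 2) (Fin 2 × Fin 2) ℂ :=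
  Matrix.vecMulVec (ψpure β γ) (fun q => starRingEnd ℂ (ψpure β γ q))

/-- The maximally entangled state `|ψ⁺⟩ = (|00⟩ + |11⟩)/√2`. -/
def ψmax : Fin 2 × Fin 2 → ℂ := fun q =>
  if q.1 = q.2 then ((1 / Real.sqrt 2 : ℝ) : ℂ) else 0

/-- The two-qubit Werner state `ρ_W(p) = p |ψ⁺⟩⟨ψ⁺| + ((1-p)/4) 1`. -/
def ρWerner (p : ℝ) : Matrix (Fin 2 × Fin 2) (Fin 2 × Fin 2) ℂ :=
  (p : ℂ) • Matrix.vecMulVec ψmax (fun q => starRingEnd ℂ (ψmax q)) +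
    (((1 - p) / 4 : ℝ) : ℂ) • 1

/-- The canonical two-qubit state with magnetizations `mx my mz` (Alice),
`nx ny nz` (Bob) and diagonal correlators `Cxx Cyy Czz`. -/
def ρcan (mx my mz nx ny nz Cxx Cyy Czz : ℝ) :
    Matrix (Fin 2 × Fin 2) (Fin 2 × Fin 2) ℂ :=
  (1/4 : ℂ) • ((1 : Matrix (Fin 2 × Fin 2) (Fin 2 × Fin 2) ℂ)
    + (mx : ℂ) • (σx ⊗ₖ (1 : Matrix (Fin 2) (Fin 2) ℂ))
    + (my : ℂ) • (σy ⊗ₖ (1 : Matrix (Fin 2) (Fin 2) ℂ))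
    + (mz : ℂ) • (σz ⊗ₖ (1 : Matrix (Fin 2) (Fin 2) ℂ))
    + (nx : ℂ) • ((1 : Matrix (Fin 2) (Fin 2) ℂ) ⊗ₖ σx)
    + (ny : ℂ) • ((1 : Matrix (Fin 2) (Fin 2) ℂ) ⊗ₖ σy)
    + (nz : ℂ) • ((1 : Matrix (Fin 2) (Fin 2) ℂ) ⊗ₖ σz)
    + (Cxx : ℂ) • (σx ⊗ₖ σx)
    + (Cyy : ℂ) • (σy ⊗ₖ σy)
    + (Czz : ℂ) • (σz ⊗ₖ σz))

/-- Bob's reduced matrix: the partial trace over Alice's subsystem. -/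
def ptraceA (X : Matrix (Fin 2 × Fin 2) (Fin 2 × Fin 2) ℂ) :
    Matrix (Fin 2) (Fin 2) ℂ :=
  Matrix.of fun i j => ∑ k : Fin 2, X (k, i) (k, j)

/-- The trace distance `T(A,B) = (1/2) tr √((A-B)ᴴ (A-B))`, where the square
root is the positive semidefinite square root. -/
def traceDist (A B : Matrix (Fin 2) (Fin 2) ℂ) : ℝ :=
  (1/2) * (((Matrix.posSemidef_conjTranspose_mul_self (A - B)).1.eigenvectorUnitary.1 *
    Matrix.diagonal ((RCLike.ofReal : ℝ → ℂ) ∘ (fun x => Real.sqrt x) ∘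
      (Matrix.posSemidef_conjTranspose_mul_self (A - B)).1.eigenvalues) *
    (star (Matrix.posSemidef_conjTranspose_mul_self (A - B)).1.eigenvectorUnitary :
      Matrix (Fin 2) (Fin 2) ℂ)).trace).re

lemma rank_one_of_vecMulVec (w v : Fin 2 → ℂ) (hw : w ≠ 0) (j : Fin 2) (hv : v j ≠ 0) :
    (Matrix.vecMulVec w v).rank = 1 := by
  have hrange : LinearMap.range (Matrix.vecMulVec w v).mulVecLin
      = Submodule.span ℂ {w} := by
    apply le_antisymm
    · rintro _ ⟨x, rfl⟩
      have hx : (Matrix.vecMulVec w v).mulVecLin x = (v ⬝ᵥ x) • w := by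
        ext i
        simp [Matrix.mulVec, Matrix.vecMulVec_apply, dotProduct, Fin.sum_univ_two]
        ring
      rw [hx]
      exact Submodule.smul_mem _ _ (Submodule.mem_span_singleton_self w)
    · rw [Submodule.span_le, Set.singleton_subset_iff]
      refine ⟨fun k => if k = j then (v j)⁻¹ else 0, ?_⟩
      ext i
      fin_cases j <;>
        simp [Matrix.mulVec, Matrix.vecMulVec_apply, dotProduct, Fin.sum_univ_two] <;>
        exact mul_inv_cancel_right₀ (by simpa using hv) _
  rw [Matrix.rank, hrange, finrank_span_singleton hw]

set_option maxHeartbeats 1000000 in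
/-- Perfect distinguishability at the exceptional point: for the maximally
entangled shared state and `α = π/2`, Bob's normalized reduced states for
Alice's two operations are the orthogonal rank-one projectors onto `|−_y⟩` and
`|+_y⟩`, and their trace distance is `1`. -/
theorem stmt18 (α : ℝ) (hα : α = Real.pi / 2)
    (ρ : Matrix (Fin 2 × Fin 2) (Fin 2 × Fin 2) ℂ)
    (hρ : ρ = Matrix.vecMulVec ψmax (fun q => starRingEnd ℂ (ψmax q)))
    (Bplus Bminus : Matrix (Fin 2) (Fin 2) ℂ)
    (hBplus : Bplus = (((postPlus α ρ).trace).re)⁻¹ • ptraceA (postPlus α ρ))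
    (hBminus : Bminus = (((postMinus α ρ).trace).re)⁻¹ • ptraceA (postMinus α ρ)) :
    Bplus = (1/2 : ℂ) • !![1, Complex.I; -Complex.I, 1] ∧
    Bminus = (1/2 : ℂ) • !![1, -Complex.I; Complex.I, 1] ∧
    Bplus * Bplus = Bplus ∧ Bplusᴴ = Bplus ∧ Bminus * Bminus = Bminus ∧ Bminusᴴ = Bminus ∧
    Bplus * Bminus = 0 ∧ Bplus.rank = 1 ∧ Bminus.rank = 1 ∧
    traceDist Bplus Bminus = 1 := by
  have hU : Upt α = !![1, -Complex.I; -Complex.I, -1] := by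
    rw [Upt, hα, Real.sin_pi_div_two]; norm_num
  have hUp : Upt α * Apos = !![1, -Complex.I; -Complex.I, -1] := by
    rw [hU, Apos, mul_one]
  have hUm : Upt α * Aneg = !![-Complex.I, 1; -1, -Complex.I] := by
    rw [hU, Aneg, σx]
    ext i j
    fin_cases i <;> fin_cases j <;>
      simp [Matrix.mul_apply, Fin.sum_univ_two]
  have htrp : (postPlus α ρ).trace = 2 := by
    simp [postPlus, hUp, hρ, Matrix.mul_apply, Fintype.sum_prod_type,
      Fin.sum_univ_two, Matrix.kroneckerMap_apply, Matrix.vecMulVec_apply, ψmax,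
      Matrix.one_apply, Matrix.trace, Matrix.conjTranspose_apply, Matrix.diag]
    ring_nf
    norm_num [Complex.ext_iff, ← Complex.ofReal_pow, Real.sq_sqrt]
  have htrm : (postMinus α ρ).trace = 2 := by
    simp [postMinus, hUm, hρ, Matrix.mul_apply, Fintype.sum_prod_type,
      Fin.sum_univ_two, Matrix.kroneckerMap_apply, Matrix.vecMulVec_apply, ψmax,
      Matrix.one_apply, Matrix.trace, Matrix.conjTranspose_apply, Matrix.diag]
    ring_nf
    norm_num [Complex.ext_iff, ← Complex.ofReal_pow, Real.sq_sqrt]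
  have hptp : ptraceA (postPlus α ρ) = !![1, Complex.I; -Complex.I, 1] := by
    ext i j
    fin_cases i <;> fin_cases j <;>
      simp [ptraceA, postPlus, hUp, hρ, Matrix.mul_apply, Fintype.sum_prod_type,
        Fin.sum_univ_two, Matrix.kroneckerMap_apply, Matrix.vecMulVec_apply, ψmax,
        Matrix.one_apply, Matrix.conjTranspose_apply] <;>
      ring_nf <;>
      norm_num [Complex.ext_iff, ← Complex.ofReal_pow, Real.sq_sqrt]
  have hptm : ptraceA (postMinus α ρ) = !![1, -Complex.I; Complex.I, 1] := by
    ext i j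
    fin_cases i <;> fin_cases j <;>
      simp [ptraceA, postMinus, hUm, hρ, Matrix.mul_apply, Fintype.sum_prod_type,
        Fin.sum_univ_two, Matrix.kroneckerMap_apply, Matrix.vecMulVec_apply, ψmax,
        Matrix.one_apply, Matrix.conjTranspose_apply] <;>
      ring_nf <;>
      norm_num [Complex.ext_iff, ← Complex.ofReal_pow, Real.sq_sqrt]
  have hBp : Bplus = (1/2 : ℂ) • !![1, Complex.I; -Complex.I, 1] := by
    rw [hBplus, htrp, hptp]
    ext i j
    fin_cases i <;> fin_cases j <;>
      simp [Complex.ext_iff, Complex.real_smul] <;> norm_num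
  have hBm : Bminus = (1/2 : ℂ) • !![1, -Complex.I; Complex.I, 1] := by
    rw [hBminus, htrm, hptm]
    ext i j
    fin_cases i <;> fin_cases j <;>
      simp [Complex.ext_iff, Complex.real_smul] <;> norm_num
  refine ⟨hBp, hBm, ?_, ?_, ?_, ?_, ?_, ?_, ?_, ?_⟩
  · rw [hBp]; ext i j
    fin_cases i <;> fin_cases j <;>
      simp [Matrix.mul_apply, Fin.sum_univ_two] <;> ring_nf <;>
      simp [Complex.ext_iff] <;> norm_num
  · rw [hBp]; ext i j
    fin_cases i <;> fin_cases j <;>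
      simp [Matrix.conjTranspose_apply]
  · rw [hBm]; ext i j
    fin_cases i <;> fin_cases j <;>
      simp [Matrix.mul_apply, Fin.sum_univ_two] <;> ring_nf <;>
      simp [Complex.ext_iff] <;> norm_num
  · rw [hBm]; ext i j
    fin_cases i <;> fin_cases j <;>
      simp [Matrix.conjTranspose_apply]
  · rw [hBp, hBm]; ext i j
    fin_cases i <;> fin_cases j <;>
      simp [Matrix.mul_apply, Fin.sum_univ_two] <;> ring_nf <;>
      simp [Complex.ext_iff] <;> norm_num
  · have hvv : Bplus = Matrix.vecMulVec ![(1/2 : ℂ), -Complex.I/2] ![1, Complex.I] := by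
      rw [hBp]; ext i j
      fin_cases i <;> fin_cases j <;>
        simp [Matrix.vecMulVec_apply] <;> ring_nf <;>
        simp [Complex.ext_iff] <;> norm_num
    rw [hvv]
    refine rank_one_of_vecMulVec _ _ ?_ 0 (by norm_num)
    intro h
    have := congrFun h 0
    norm_num at this
  · have hvv : Bminus = Matrix.vecMulVec ![(1/2 : ℂ), Complex.I/2] ![1, -Complex.I] := by
      rw [hBm]; ext i j
      fin_cases i <;> fin_cases j <;>
        simp [Matrix.vecMulVec_apply] <;> ring_nf <;>
        simp [Complex.ext_iff] <;> norm_num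
    rw [hvv]
    refine rank_one_of_vecMulVec _ _ ?_ 0 (by norm_num)
    intro h
    have := congrFun h 0
    norm_num at this
  · have hsub : Bplus - Bminus = !![0, Complex.I; -Complex.I, 0] := by
      rw [hBp, hBm]; ext i j
      fin_cases i <;> fin_cases j <;>
        simp [Matrix.sub_apply] <;> ring_nf
    have hD : (Bplus - Bminus)ᴴ * (Bplus - Bminus) = 1 := by
      rw [hsub]; ext i j
      fin_cases i <;> fin_cases j <;>
        simp [Matrix.mul_apply, Fin.sum_univ_two, Matrix.conjTranspose_apply,
          Matrix.one_apply] <;> ring_nf <;>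
        simp [Complex.ext_iff] <;> norm_num
    have hMv : ∀ x : Fin 2 → ℂ, ((Bplus - Bminus)ᴴ * (Bplus - Bminus)) *ᵥ x = x := by
      intro x; rw [hD, Matrix.one_mulVec]
    have hev : ∀ i, (Matrix.posSemidef_conjTranspose_mul_self (Bplus - Bminus)).1.eigenvalues i
        = 1 := by
      intro i
      have h1 := (Matrix.posSemidef_conjTranspose_mul_self (Bplus - Bminus)).1.mulVec_eigenvectorBasis i
      rw [hMv] at h1
      have hne := (WithLp.ofLp_eq_zero 2).ne.2 <|
        (Matrix.posSemidef_conjTranspose_mul_self (Bplus - Bminus)).1.eigenvectorBasis.orthonormal.ne_zero i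
      by_contra hc
      have h2 : (1 - (Matrix.posSemidef_conjTranspose_mul_self (Bplus - Bminus)).1.eigenvalues i) •
          ⇑((Matrix.posSemidef_conjTranspose_mul_self (Bplus - Bminus)).1.eigenvectorBasis i) = 0 := by
        rw [sub_smul, one_smul, ← h1, sub_self]
      rcases smul_eq_zero.mp h2 with h3 | h3
      · exact hc (by linarith)
      · exact hne h3
    have hdiag : Matrix.diagonal ((RCLike.ofReal : ℝ → ℂ) ∘ (fun x => Real.sqrt x) ∘
        (Matrix.posSemidef_conjTranspose_mul_self (Bplus - Bminus)).1.eigenvalues) = 1 := by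
      rw [show ((RCLike.ofReal : ℝ → ℂ) ∘ (fun x => Real.sqrt x) ∘
        (Matrix.posSemidef_conjTranspose_mul_self (Bplus - Bminus)).1.eigenvalues) = fun _ => 1 from
        funext fun i => by rw [Function.comp_apply, Function.comp_apply, hev i]; simp]
      exact Matrix.diagonal_one
    rw [traceDist, hdiag, Matrix.mul_one]
    simp [Matrix.trace_one]
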